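/- Joint BDM is symmetric: for any two decomposed objects X and Y, JointBDM(X,Y) = JointBDM(Y,X), i.e. BDM(Y|X) + BDM(X) = BDM(X|Y) + BDM(Y). -/
import Mathlib


open Finsupp

/-- The multiplicity correction term: `f n m = 0` if `n = m`, else `log n`. -/
noncomputable def bdmF (n m : ℕ) : ℝ := if n = m then 0 else Real.log n

/-- The (unconditional) BDM of a decomposed object given by its multiplicity function. -/
noncomputable def BDM {R : Type*} (CTM : R → ℝ) (X : R →₀ ℕ) : ℝ :=
  ∑ r ∈ X.support, (CTM r + Real.log (X r))

/-- The coarse conditional BDM of `X` given `Y`. -/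
noncomputable def condBDM {R : Type*} [DecidableEq R] (CTM : R → ℝ) (X Y : R →₀ ℕ) : ℝ :=
  ∑ r ∈ X.support \ Y.support, (CTM r + Real.log (X r)) +
  ∑ r ∈ X.support ∩ Y.support, bdmF (X r) (Y r)

lemma bdm_split {R : Type*} [DecidableEq R] (CTM : R → ℝ) (X Y : R →₀ ℕ) :
    BDM CTM X = ∑ r ∈ X.support \ Y.support, (CTM r + Real.log (X r)) +
      ∑ r ∈ X.support ∩ Y.support, (CTM r + Real.log (X r)) := by
  rw [BDM, ← Finset.sum_union (Finset.disjoint_sdiff_inter _ _),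
    Finset.sdiff_union_inter]

/-- Joint BDM is symmetric: `BDM(Y|X) + BDM(X) = BDM(X|Y) + BDM(Y)`. -/
theorem jointBDM_symm {R : Type*} [DecidableEq R] (CTM : R → ℝ) (X Y : R →₀ ℕ) :
    condBDM CTM Y X + BDM CTM X = condBDM CTM X Y + BDM CTM Y := by
  rw [bdm_split CTM X Y, bdm_split CTM Y X, condBDM, condBDM,
    Finset.inter_comm Y.support X.support]
  have key : ∑ r ∈ X.support ∩ Y.support, bdmF (Y r) (X r) +
      ∑ r ∈ X.support ∩ Y.support, (CTM r + Real.log (X r)) =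
      ∑ r ∈ X.support ∩ Y.support, bdmF (X r) (Y r) +
      ∑ r ∈ X.support ∩ Y.support, (CTM r + Real.log (Y r)) := by
    rw [← Finset.sum_add_distrib, ← Finset.sum_add_distrib]
    refine Finset.sum_congr rfl fun r _ => ?_
    unfold bdmF
    by_cases h : X r = Y r
    · rw [if_pos h.symm, if_pos h, h]
    · rw [if_neg (fun h' => h h'.symm), if_neg h]
      ring
  linarith
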